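/- Let p be a prime, r ∈ ℕ*, and m ∈ ℕ with base-p expansion m = ∑_j m_j p^j. Suppose there exists a residue class i_0 modulo r such that ∑_{j ≡ i_0 (mod r)} m_j ≥ p^r − 1. Then there exists m' ∈ ℕ* with m' divisible by p^r − 1 and such that every base-p digit of m' is at most the corresponding base-p digit of m; in particular, C(m, m') is not divisible by p. -/

import Mathlib

/-- Selection lemma: any target below a sum can be realized by digit-wise smaller values. -/
lemma aux_select (w : ℕ → ℕ) (s : Finset ℕ) : ∀ t, t ≤ ∑ j ∈ s, w j →
    ∃ c : ℕ → ℕ, (∀ j ∈ s, c j ≤ w j) ∧ ∑ j ∈ s, c j = t := by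
  classical
  induction s using Finset.induction_on with
  | empty => intro t ht; simp at ht; exact ⟨fun _ => 0, by simp, by simp [ht]⟩
  | insert a s' ha ih =>
    intro t ht
    rw [Finset.sum_insert ha] at ht
    obtain ⟨c, hc1, hc2⟩ := ih (t - min t (w a)) (by omega)
    refine ⟨fun j => if j = a then min t (w a) else c j, ?_, ?_⟩
    · intro j hj
      rcases Finset.mem_insert.1 hj with rfl | hj
      · simp [min_le_right]
      · have : j ≠ a := fun h => ha (h ▸ hj)
        simpa [this] using hc1 j hj
    · rw [Finset.sum_insert ha]
      have heq : ∑ j ∈ s', (if j = a then min t (w a) else c j) = ∑ j ∈ s', c j :=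
        Finset.sum_congr rfl fun j hj => by
          have : j ≠ a := fun h => ha (h ▸ hj); simp [this]
      rw [if_pos rfl, heq, hc2]
      omega

/-- Bound: a number with base-`p` digits `< p` on `range n` is `< p ^ n`. -/
lemma aux_lt (p : ℕ) (hp : 2 ≤ p) : ∀ (n : ℕ) (d : ℕ → ℕ), (∀ j, d j < p) →
    (∑ j ∈ Finset.range n, d j * p ^ j) < p ^ n := by
  intro n
  induction n with
  | zero => intro d _; simp
  | succ n ih =>
    intro d hd
    rw [Finset.sum_range_succ']
    have h1 : ∑ j ∈ Finset.range n, d (j + 1) * p ^ (j + 1)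
        = (∑ j ∈ Finset.range n, d (j + 1) * p ^ j) * p := by
      rw [Finset.sum_mul]
      exact Finset.sum_congr rfl fun j _ => by ring
    have h2 := ih (fun j => d (j + 1)) (fun j => hd (j + 1))
    have h3 := hd 0
    rw [h1]
    simp only [pow_zero, mul_one, pow_succ]
    nlinarith

/-- Digit extraction from a sum of digits times powers. -/
lemma aux_digit (p : ℕ) (hp : 2 ≤ p) : ∀ (n : ℕ) (d : ℕ → ℕ), (∀ j, d j < p) → ∀ k,
    (∑ j ∈ Finset.range n, d j * p ^ j) / p ^ k % p = if k < n then d k else 0 := by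
  intro n
  induction n with
  | zero => intro d _ k; simp
  | succ n ih =>
    intro d hd k
    have hdecomp : ∑ j ∈ Finset.range (n + 1), d j * p ^ j
        = d 0 + (∑ j ∈ Finset.range n, d (j + 1) * p ^ j) * p := by
      rw [Finset.sum_range_succ', Finset.sum_mul]
      simp only [pow_zero, mul_one]
      rw [Nat.add_comm]
      congr 1
      exact Finset.sum_congr rfl fun j _ => by ring
    rw [hdecomp]
    cases k with
    | zero =>
      simp only [pow_zero, Nat.div_one, if_pos (Nat.succ_pos n)]
      rw [Nat.add_mul_mod_self_right]
      exact Nat.mod_eq_of_lt (hd 0)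
    | succ k =>
      have hdiv : (d 0 + (∑ j ∈ Finset.range n, d (j + 1) * p ^ j) * p) / p ^ (k + 1)
          = (∑ j ∈ Finset.range n, d (j + 1) * p ^ j) / p ^ k := by
        rw [pow_succ, pow_mul_comm', ← Nat.div_div_eq_div_mul]
        congr 1
        rw [Nat.add_mul_div_right _ _ (by omega : 0 < p)]
        rw [Nat.div_eq_of_lt (hd 0)]
        omega
      rw [hdiv, ih (fun j => d (j + 1)) (fun j => hd (j + 1)) k]
      simp [Nat.succ_lt_succ_iff]

/-- If for some residue class `i0` mod `r` the base-`p` digits of `m` at positions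
congruent to `i0` sum to at least `p^r - 1`, then there is `m' ≥ 1` divisible by
`p^r - 1` whose base-`p` digits are bounded digit-wise by those of `m`; in particular
`p ∤ C(m, m')`. -/
theorem exists_dvd_digitwise_le (p r m : ℕ) (hp : p.Prime) (hr : 1 ≤ r)
    (h : ∃ i0 < r, p ^ r - 1 ≤
      ∑ j ∈ Finset.range (m + 1), if j % r = i0 then m / p ^ j % p else 0) :
    ∃ m', 0 < m' ∧ (p ^ r - 1) ∣ m' ∧
      (∀ j, m' / p ^ j % p ≤ m / p ^ j % p) ∧ ¬ p ∣ Nat.choose m m' := by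
  classical
  obtain ⟨i0, hi0, hsum⟩ := h
  have hp2 : 2 ≤ p := hp.two_le
  have hpr1 : 1 ≤ p ^ r - 1 := by
    have : 2 ≤ p ^ r := le_trans hp2 (Nat.le_self_pow (by omega) p)
    omega
  set N := p ^ r - 1 with hN
  set w : ℕ → ℕ := fun j => m / p ^ j % p with hw
  set s : Finset ℕ := (Finset.range (m + 1)).filter (fun j => j % r = i0) with hs
  have hsum' : N ≤ ∑ j ∈ s, w j := by
    rwa [hs, Finset.sum_filter]
  obtain ⟨c, hc1, hc2⟩ := aux_select w s N hsum'
  set d : ℕ → ℕ := fun j => if j ∈ s then c j else 0 with hd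
  have hdlt : ∀ j, d j < p := by
    intro j
    by_cases hj : j ∈ s
    · have h1 : d j = c j := by simp [hd, hj]
      rw [h1]
      exact lt_of_le_of_lt (hc1 j hj) (Nat.mod_lt _ (by omega))
    · simp [hd, hj]; omega
  set m' : ℕ := ∑ j ∈ Finset.range (m + 1), d j * p ^ j with hm'
  have hssub : s ⊆ Finset.range (m + 1) := Finset.filter_subset _ _
  -- digits of m'
  have hdig : ∀ k, m' / p ^ k % p = if k < m + 1 then d k else 0 :=
    aux_digit p hp2 (m + 1) d hdlt
  have hdigle : ∀ j, m' / p ^ j % p ≤ m / p ^ j % p := by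
    intro j
    rw [hdig j]
    split
    · by_cases hj : j ∈ s
      · simpa [hd, hj] using hc1 j hj
      · simp [hd, hj]
    · exact Nat.zero_le _
  -- positivity
  have hpos : 0 < m' := by
    have h1 : ∑ j ∈ s, c j ≤ m' := by
      rw [hm']
      calc ∑ j ∈ s, c j = ∑ j ∈ s, d j :=
            Finset.sum_congr rfl fun j hj => by simp [hd, hj]
        _ = ∑ j ∈ Finset.range (m + 1), d j :=
            Finset.sum_subset hssub (fun x _ hx => by simp [hd, hx])
        _ ≤ ∑ j ∈ Finset.range (m + 1), d j * p ^ j :=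
            Finset.sum_le_sum fun j _ => Nat.le_mul_of_pos_right _ (Nat.pow_pos (by omega))
    omega
  -- divisibility
  have hdvd : N ∣ m' := by
    have hprN : p ^ r ≡ 1 [MOD N] := by
      have : p ^ r = 1 + N := by omega
      rw [this]
      simpa using (Nat.add_mul_mod_self_left 1 N 1 ▸ (rfl : (1 + N * 1) % N = (1 + N * 1) % N)).trans
        (by rw [Nat.mul_one, Nat.add_mul_mod_self_left])
    have hpow : ∀ j, p ^ j ≡ p ^ (j % r) [MOD N] := by
      intro j
      conv_lhs => rw [← Nat.div_add_mod j r]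
      rw [pow_add, pow_mul]
      calc (p ^ r) ^ (j / r) * p ^ (j % r)
          ≡ 1 ^ (j / r) * p ^ (j % r) [MOD N] := (hprN.pow _).mul_right _
        _ = p ^ (j % r) := by rw [one_pow, one_mul]
    have key : m' % N = ((p ^ r - 1) * p ^ i0) % N := by
      calc m' % N = (∑ j ∈ Finset.range (m + 1), d j * p ^ j % N) % N :=
            Finset.sum_nat_mod _ _ _
        _ = (∑ j ∈ Finset.range (m + 1), d j * p ^ (j % r) % N) % N := by
            congr 1
            exact Finset.sum_congr rfl fun j _ => (hpow j).mul_left (d j)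
        _ = (∑ j ∈ Finset.range (m + 1), d j * p ^ (j % r)) % N :=
            (Finset.sum_nat_mod _ _ _).symm
        _ = (N * p ^ i0) % N := by
            congr 1
            rw [← Finset.sum_subset hssub (fun x _ hx => by simp [hd, hx])]
            calc ∑ j ∈ s, d j * p ^ (j % r) = ∑ j ∈ s, c j * p ^ i0 := by
                  refine Finset.sum_congr rfl fun j hj => ?_
                  have hji : j % r = i0 := (Finset.mem_filter.1 hj).2
                  simp [hd, hj, hji]
              _ = N * p ^ i0 := by rw [← Finset.sum_mul, hc2]
    rw [Nat.dvd_iff_mod_eq_zero, key, Nat.mul_mod_right]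
  -- Lucas
  haveI : Fact p.Prime := ⟨hp⟩
  have hmlt : m < p ^ (m + 1) :=
    lt_of_lt_of_le ((Nat.lt_two_pow_self (n := m))) (le_trans (Nat.pow_le_pow_left hp2 m)
      (Nat.pow_le_pow_right (by omega) (by omega)))
  have hm'lt : m' < p ^ (m + 1) := aux_lt p hp2 (m + 1) d hdlt
  have hlucas := Choose.lucas_theorem_nat (p := p) hmlt hm'lt
  refine ⟨m', hpos, hdvd, hdigle, ?_⟩
  intro hdvdp
  have hdvdprod : p ∣ ∏ i ∈ Finset.range (m + 1),
      Nat.choose (m / p ^ i % p) (m' / p ^ i % p) := by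
    have := (Nat.modEq_zero_iff_dvd.2 hdvdp).symm.trans hlucas
    exact Nat.modEq_zero_iff_dvd.1 this.symm
  obtain ⟨i, _, hi⟩ := (hp.prime.dvd_finset_prod_iff _).1 hdvdprod
  have hle : m' / p ^ i % p ≤ m / p ^ i % p := hdigle i
  have heq := Nat.choose_mul_factorial_mul_factorial hle
  have hfac : p ∣ Nat.factorial (m / p ^ i % p) := by
    rw [← heq]
    exact (hi.mul_right _).mul_right _
  have := (Nat.Prime.dvd_factorial hp).1 hfac
  have : m / p ^ i % p < p := Nat.mod_lt _ (by omega)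
  omega
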